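/- Let A = (aᵢⱼ) be the Cartan matrix of a Lie superalgebra of type A–G with simple roots α₁,…,αₛ and exactly one odd simple root αₘ with aₘₘ = 0 and m−1, m, m+1 ∈ {1,…,s}, with symmetrizing constants d_{m−1} = d_m = 1, d_{m+1} = −1 and aᵢⱼ = (1+(−1)^{δ_{i,m}})δ_{i,j} − (−1)^{δ_{i,m}}δ_{i,j−1} − δ_{i,j+1} for i,j ∈ {m−1,m,m+1}. In the free associative superalgebra 'f over ℂ(q) on generators θᵢ (with θₘ odd, the others even), equipped with the unique bilinear form C satisfying C(1,1)=1, C(θᵢ,θⱼ) = δᵢⱼ(qᵢ−qᵢ^{−1})^{−1} for i=j≠m, C(θₘ,θₘ)=1, and compatibility with the twisted comultiplication r(θᵢ) = θᵢ⊗1 + 1⊗θᵢ, the element l = θₘθ_{m−1}θₘθ_{m+1} + θₘθ_{m+1}θₘθ_{m−1} + θ_{m−1}θₘθ_{m+1}θₘ + θ_{m+1}θₘθ_{m−1}θₘ − (q+q^{−1})θₘθ_{m−1}θ_{m+1}θₘ lies in the kernel of C; in particular C(θ_{m+1}θₘθ_{m−1}θₘ, l) = 0. -/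

import Mathlib

open TensorProduct
open scoped TensorProduct

noncomputable section

set_option maxHeartbeats 0
set_option synthInstance.maxHeartbeats 1000000


/-- The base field `ℂ(q)`. -/
abbrev Kq : Type := RatFunc ℂ

/-- The indeterminate `q`. -/
def qq : Kq := RatFunc.X

/-- The free associative superalgebra `'f` on the generators
`θ_{m-1}, θ_m, θ_{m+1}` (indexed by `0, 1, 2`). -/
abbrev Ff : Type := FreeAlgebra Kq (Fin 3)

/-- The generators `θᵢ`. -/
def θ (i : Fin 3) : Ff := FreeAlgebra.ι Kq i

/-- Parities of the generators: only `θ_m` (index 1) is odd. -/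
def pgen : Fin 3 → ZMod 2 := ![0, 1, 0]

/-- The parity of a multidegree `ν ∈ ℕ[I]`. -/
def pardeg (ν : Fin 3 → ℕ) : ZMod 2 := ∑ i : Fin 3, (ν i : ZMod 2) * pgen i

/-- The symmetrizing constants `d_{m-1} = d_m = 1`, `d_{m+1} = −1`. -/
def dsym : Fin 3 → ℤ := ![1, 1, -1]

/-- The Cartan matrix
`aᵢⱼ = (1+(−1)^{δ_{i,m}})δ_{i,j} − (−1)^{δ_{i,m}}δ_{i,j−1} − δ_{i,j+1}`
(indices `0,1,2` standing for `m−1, m, m+1`; the odd root is `m = 1`, with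
`a_{mm} = 0`). -/
def cartanA : Fin 3 → Fin 3 → ℤ := fun i j =>
  (1 + (-1 : ℤ) ^ (if i = (1 : Fin 3) then 1 else 0)) * (if i = j then 1 else 0)
  - (-1 : ℤ) ^ (if i = (1 : Fin 3) then 1 else 0) *
      (if (i : ℕ) + 1 = (j : ℕ) then 1 else 0)
  - (if (i : ℕ) = (j : ℕ) + 1 then 1 else 0)

/-- `⟨ν,ν′⟩ = Σᵢⱼ dᵢ aᵢⱼ νᵢ ν′ⱼ`. -/
def pairdeg (ν μ : Fin 3 → ℕ) : ℤ :=
  ∑ i : Fin 3, ∑ j : Fin 3, dsym i * cartanA i j * (ν i : ℤ) * (μ j : ℤ)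

/-- `qᵢ = q^{dᵢ}`. -/
def qd (i : Fin 3) : Kq := qq ^ dsym i

/-! ### Auxiliary definitions -/

def wd (L : List (Fin 3)) : Ff := (L.map θ).prod

def cnt : List (Fin 3) → Fin 3 → ℕ
  | [] => fun _ => 0
  | j :: t => fun i => (if i = j then 1 else 0) + cnt t i

def parR (u : List (Fin 3)) : ℕ := (u.map fun i => if i = (1 : Fin 3) then 1 else 0).sum

def parN (u : List (Fin 3)) : ℕ := parR u % 2

def dca : Fin 3 → Fin 3 → ℤ := ![![2,-1,0],![-1,0,1],![0,1,-2]]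

def pairZ (j : Fin 3) (u : List (Fin 3)) : ℤ := (u.map fun k => dca j k).sum

def tw (j : Fin 3) (u : List (Fin 3)) : Kq :=
  (-1 : Kq) ^ (parN [j] * parN u) * qq ^ pairZ j u

def cval (i : Fin 3) : Kq := if i = 1 then 1 else (qd i - (qd i)⁻¹)⁻¹

def rcL : List (Fin 3) → List (Kq × List (Fin 3) × List (Fin 3))
  | [] => [(1, [], [])]
  | j :: t =>
      ((rcL t).map fun p => (p.1, j :: p.2.1, p.2.2)) ++
      ((rcL t).map fun p => (p.1 * tw j p.2.1, p.2.1, j :: p.2.2))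

/-! ### Basic lemmas -/

lemma wd_nil : wd [] = 1 := rfl
lemma wd_cons (j : Fin 3) (t : List (Fin 3)) : wd (j :: t) = θ j * wd t := by
  simp [wd]
lemma wd_single (j : Fin 3) : wd [j] = θ j := by simp [wd]

lemma cnt_nil : cnt [] = 0 := rfl
lemma cnt_cons (j : Fin 3) (t : List (Fin 3)) :
    cnt (j :: t) = Pi.single j 1 + cnt t := by
  funext i
  simp [cnt, Pi.single_apply]

lemma sum_cnt (L : List (Fin 3)) : ∑ i, cnt L i = L.length := by
  induction L with
  | nil => simp [cnt]
  | cons j t ih =>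
    simp only [cnt, Finset.sum_add_distrib, ih, List.length_cons,
      Finset.sum_ite_eq', Finset.mem_univ, if_true]
    omega

lemma pardeg_add (ν μ : Fin 3 → ℕ) : pardeg (ν + μ) = pardeg ν + pardeg μ := by
  simp [pardeg, Pi.add_apply, Nat.cast_add, add_mul, Finset.sum_add_distrib]

lemma pardeg_zero : pardeg 0 = 0 := by decide

lemma pardeg_cnt (u : List (Fin 3)) : pardeg (cnt u) = ((parR u : ℕ) : ZMod 2) := by
  induction u with
  | nil => decide
  | cons j t ih =>
    rw [cnt_cons, pardeg_add, ih]
    have h1 : pardeg (Pi.single j 1) = ((if j = (1 : Fin 3) then 1 else 0 : ℕ) : ZMod 2) := by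
      fin_cases j <;> decide
    rw [h1]
    simp only [parR, List.map_cons, List.sum_cons, Nat.cast_add]

lemma pardeg_cnt_val (u : List (Fin 3)) : (pardeg (cnt u)).val = parN u := by
  rw [pardeg_cnt, ZMod.val_natCast]
  rfl

lemma pairdeg_add_right (ν μ₁ μ₂ : Fin 3 → ℕ) :
    pairdeg ν (μ₁ + μ₂) = pairdeg ν μ₁ + pairdeg ν μ₂ := by
  simp [pairdeg, Pi.add_apply, Nat.cast_add, mul_add, Finset.sum_add_distrib]

lemma pairdeg_zero_left (μ : Fin 3 → ℕ) : pairdeg 0 μ = 0 := by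
  simp [pairdeg]

lemma pairdeg_single_cnt (j : Fin 3) (u : List (Fin 3)) :
    pairdeg (Pi.single j 1) (cnt u) = pairZ j u := by
  induction u with
  | nil =>
    have : cnt [] = 0 := cnt_nil
    rw [this]
    have : pairZ j [] = 0 := rfl
    rw [this]
    fin_cases j <;> decide
  | cons k t ih =>
    rw [cnt_cons, pairdeg_add_right, ih]
    have h : pairdeg (Pi.single j 1) (Pi.single k 1) = dca j k := by
      fin_cases j <;> fin_cases k <;> decide
    rw [h]
    simp [pairZ]

lemma pardeg_single_val (j : Fin 3) : (pardeg (Pi.single j 1)).val = parN [j] := by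
  fin_cases j <;> decide

lemma tw_eq (j : Fin 3) (u : List (Fin 3)) :
    tw j u = (-1 : Kq) ^ ((pardeg (Pi.single j 1)).val * (pardeg (cnt u)).val) *
      qq ^ (pairdeg (Pi.single j 1) (cnt u)) := by
  rw [pardeg_single_val, pardeg_cnt_val, pairdeg_single_cnt]
  rfl

lemma qq_ne_zero : qq ≠ 0 := RatFunc.X_ne_zero

lemma qq_sq_ne_one : qq ^ 2 - 1 ≠ 0 := by
  intro h
  have h2 : (qq : Kq) ^ 2 = 1 := by linear_combination h
  have hX : (Polynomial.X ^ 2 : Polynomial ℂ) = 1 := by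
    apply IsFractionRing.injective (Polynomial ℂ) (RatFunc ℂ)
    rw [map_pow, map_one, RatFunc.algebraMap_X]
    exact h2
  have := congrArg (Polynomial.natDegree) hX
  simp [Polynomial.natDegree_one, Polynomial.natDegree_X_pow] at this

lemma inv_q_sub : (qq - qq⁻¹)⁻¹ = qq * (qq ^ 2 - 1)⁻¹ := by
  have h : qq - qq⁻¹ = (qq ^ 2 - 1) / qq := by
    rw [eq_div_iff qq_ne_zero, sub_mul, inv_mul_cancel₀ qq_ne_zero, sq]
  rw [h, inv_div, div_eq_mul_inv, mul_comm]

lemma inv_q_sub' : (qq⁻¹ - qq)⁻¹ = -(qq * (qq ^ 2 - 1)⁻¹) := by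
  rw [show qq⁻¹ - qq = -(qq - qq⁻¹) from by ring,
    show ((-(qq - qq⁻¹))⁻¹ : Kq) = -(qq - qq⁻¹)⁻¹ from inv_neg .., inv_q_sub]

lemma list_sum_map_add {α : Type*} {M : Type*} [AddCommMonoid M] (l : List α) (f g : α → M) :
    (l.map fun a => f a + g a).sum = (l.map f).sum + (l.map g).sum := by
  induction l with
  | nil => simp
  | cons a t ih => simp [ih]; abel


lemma exists_word : ∀ lst : List Ff,
    (∀ y ∈ lst, y ∈ Set.range (FreeAlgebra.ι Kq : Fin 3 → Ff)) →
    ∃ L : List (Fin 3), lst = L.map θ := by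
  intro lst
  induction lst with
  | nil => intro _; exact ⟨[], rfl⟩
  | cons a t ih =>
    intro h
    obtain ⟨L', hL'⟩ := ih (fun y hy => h y (List.mem_cons_of_mem a hy))
    obtain ⟨i, hi⟩ := h a List.mem_cons_self
    refine ⟨i :: L', ?_⟩
    rw [List.map_cons, ← hL']
    congr 1
    exact hi.symm
/-- In the free associative superalgebra `'f` on
`θ_{m-1}, θ_m, θ_{m+1}` (with `θ_m` odd), equipped with the bilinear form `C`
determined by `C(1,1) = 1`, `C(θᵢ,θⱼ) = δᵢⱼ (qᵢ − qᵢ⁻¹)⁻¹` for `i = j ≠ m`,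
`C(θₘ,θₘ) = 1`, and compatibility with the twisted comultiplication
`r(θᵢ) = θᵢ⊗1 + 1⊗θᵢ` (where `'f ⊗ 'f` carries the twisted super
multiplication), the element
`l = θₘθ_{m−1}θₘθ_{m+1} + θₘθ_{m+1}θₘθ_{m−1} + θ_{m−1}θₘθ_{m+1}θₘ +
θ_{m+1}θₘθ_{m−1}θₘ − (q+q⁻¹)θₘθ_{m−1}θ_{m+1}θₘ`
lies in the kernel of `C`; in particular `C(θ_{m+1}θₘθ_{m−1}θₘ, l) = 0`. -/
theorem quantum_serre_C_in_kernel
    -- the multidegree grading of the free algebra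
    (grF : (Fin 3 → ℕ) → Submodule Kq Ff)
    (hgr_one : (1 : Ff) ∈ grF 0)
    (hgr_gen : ∀ i, θ i ∈ grF (Pi.single i 1))
    (hgr_mul : ∀ (ν μ : Fin 3 → ℕ) (x y : Ff),
      x ∈ grF ν → y ∈ grF μ → x * y ∈ grF (ν + μ))
    (hgr_span : ∀ ν : Fin 3 → ℕ, grF ν ≤ Submodule.span Kq
      {w : Ff | ∃ L : List (Fin 3), w = (L.map θ).prod ∧ ∀ i, L.count i = ν i})
    -- the twisted multiplication on 'f ⊗ 'f
    (tm : Ff ⊗[Kq] Ff →ₗ[Kq] Ff ⊗[Kq] Ff →ₗ[Kq] Ff ⊗[Kq] Ff)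
    (htm_char : ∀ (ν₁ ν₂ μ₁ μ₂ : Fin 3 → ℕ) (x₁ x₂ y₁ y₂ : Ff),
      x₁ ∈ grF ν₁ → x₂ ∈ grF ν₂ → y₁ ∈ grF μ₁ → y₂ ∈ grF μ₂ →
      tm (x₁ ⊗ₜ[Kq] x₂) (y₁ ⊗ₜ[Kq] y₂) =
        (((-1 : Kq) ^ ((pardeg ν₂).val * (pardeg μ₁).val)) * qq ^ (pairdeg ν₂ μ₁)) •
          ((x₁ * y₁) ⊗ₜ[Kq] (x₂ * y₂)))
    -- the twisted comultiplication r
    (rc : Ff →ₗ[Kq] Ff ⊗[Kq] Ff)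
    (hrc_one : rc 1 = (1 : Ff) ⊗ₜ[Kq] (1 : Ff))
    (hrc_gen : ∀ i, rc (θ i) = θ i ⊗ₜ[Kq] (1 : Ff) + (1 : Ff) ⊗ₜ[Kq] θ i)
    (hrc_mul : ∀ x y : Ff, rc (x * y) = tm (rc x) (rc y))
    -- the bilinear form C and its extension C2 to 'f ⊗ 'f
    (C : Ff →ₗ[Kq] Ff →ₗ[Kq] Kq)
    (C2 : Ff ⊗[Kq] Ff →ₗ[Kq] Ff ⊗[Kq] Ff →ₗ[Kq] Kq)
    (hC2_char : ∀ (ν μ : Fin 3 → ℕ) (x₁ x₂ y₁ y₂ : Ff),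
      x₂ ∈ grF ν → y₁ ∈ grF μ →
      C2 (x₁ ⊗ₜ[Kq] x₂) (y₁ ⊗ₜ[Kq] y₂) =
        ((-1 : Kq) ^ ((pardeg ν).val * (pardeg μ).val)) * (C x₁ y₁ * C x₂ y₂))
    (hC_one : C 1 1 = 1)
    (hC_gen : ∀ i j : Fin 3, C (θ i) (θ j) =
      if i = j then (if i = 1 then 1 else (qd i - (qd i)⁻¹)⁻¹) else 0)
    (hC_right : ∀ x y z : Ff, C x (y * z) = C2 (rc x) (y ⊗ₜ[Kq] z))
    (hC_left : ∀ x y z : Ff, C (x * y) z = C2 (x ⊗ₜ[Kq] y) (rc z))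
    (hC_deg : ∀ (ν μ : Fin 3 → ℕ), ν ≠ μ → ∀ x ∈ grF ν, ∀ y ∈ grF μ, C x y = 0) :
    ∀ l : Ff,
      l = θ 1 * θ 0 * θ 1 * θ 2 + θ 1 * θ 2 * θ 1 * θ 0 +
          θ 0 * θ 1 * θ 2 * θ 1 + θ 2 * θ 1 * θ 0 * θ 1 -
          (qq + qq⁻¹) • (θ 1 * θ 0 * θ 2 * θ 1) →
      (∀ x : Ff, C x l = 0) ∧ C (θ 2 * θ 1 * θ 0 * θ 1) l = 0 := by
  intro l hl
  -- membership of words in the grading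
  have hmem : ∀ L : List (Fin 3), wd L ∈ grF (cnt L) := by
    intro L
    induction L with
    | nil => rw [wd_nil, cnt_nil]; exact hgr_one
    | cons j t ih => rw [wd_cons, cnt_cons]; exact hgr_mul _ _ _ _ (hgr_gen j) ih
  -- C (θ i) vanishes on words other than [i]
  have hCθ : ∀ (i : Fin 3) (u : List (Fin 3)), u ≠ [i] → C (θ i) (wd u) = 0 := by
    intro i u hne
    match u with
    | [] =>
      refine hC_deg (Pi.single i 1) (cnt []) ?_ _ (hgr_gen i) _ (hmem [])
      intro h
      have := congrFun h i
      simp [cnt, Pi.single_apply] at this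
    | [j] =>
      rw [wd_single, hC_gen]
      have h : ¬ i = j := by rintro rfl; exact hne rfl
      simp [h]
    | j :: k :: v =>
      refine hC_deg (Pi.single i 1) (cnt (j :: k :: v)) ?_ _ (hgr_gen i) _ (hmem _)
      intro h
      have h1 := congrArg (fun ν : Fin 3 → ℕ => ∑ x, ν x) h
      simp only [sum_cnt] at h1
      have h2 : ∑ x, Pi.single i (1 : ℕ) x = 1 := by simp
      rw [h2] at h1
      simp at h1
  -- the comultiplication on words
  have hrc_wd : ∀ L : List (Fin 3),
      rc (wd L) = ((rcL L).map fun p => p.1 • (wd p.2.1 ⊗ₜ[Kq] wd p.2.2)).sum := by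
    intro L
    induction L with
    | nil => simp [wd_nil, rcL, hrc_one]
    | cons j t ih =>
      rw [wd_cons, hrc_mul, hrc_gen, ih, rcL]
      rw [map_list_sum (tm (θ j ⊗ₜ[Kq] 1 + 1 ⊗ₜ[Kq] θ j))]
      rw [List.map_map, List.map_append, List.map_map, List.map_map, List.sum_append]
      rw [← list_sum_map_add]
      refine congrArg List.sum (List.map_congr_left ?_)
      rintro ⟨s, u, v⟩ _
      simp only [Function.comp_apply, map_smul]
      rw [map_add tm, LinearMap.add_apply]
      rw [htm_char (Pi.single j 1) 0 (cnt u) (cnt v) _ _ _ _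
        (hgr_gen j) hgr_one (hmem u) (hmem v)]
      rw [htm_char 0 (Pi.single j 1) (cnt u) (cnt v) _ _ _ _
        hgr_one (hgr_gen j) (hmem u) (hmem v)]
      rw [pardeg_zero, pairdeg_zero_left]
      rw [← tw_eq]
      simp only [ZMod.val_zero, Nat.zero_mul, pow_zero, zpow_zero, mul_one, one_mul,
        one_smul, ← wd_cons]
      rw [smul_add, smul_smul]
  -- base case for C on words
  have hCnil : ∀ M : List (Fin 3), C (wd M) l = C (wd M) l := fun _ => rfl
  have hCbase : ∀ M : List (Fin 3), C (wd []) (wd M) = if M = [] then 1 else 0 := by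
    intro M
    match M with
    | [] => rw [if_pos rfl, wd_nil]; exact hC_one
    | j :: t =>
      rw [if_neg (by simp)]
      refine hC_deg (cnt []) (cnt (j :: t)) ?_ _ (hmem []) _ (hmem _)
      intro h
      have h1 := congrArg (fun ν : Fin 3 → ℕ => ∑ x, ν x) h
      simp only [sum_cnt] at h1
      simp at h1
  -- the recursive step for C on words
  have hstep : ∀ (i : Fin 3) (t M : List (Fin 3)), C (wd (i :: t)) (wd M) =
      ((rcL M).map fun p => p.1 *
        (if p.2.1 = [i] then
          (-1 : Kq) ^ (parN t * parN [i]) * (cval i * C (wd t) (wd p.2.2))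
        else 0)).sum := by
    intro i t M
    rw [wd_cons, hC_left, hrc_wd M, map_list_sum (C2 (θ i ⊗ₜ[Kq] wd t)), List.map_map]
    refine congrArg List.sum (List.map_congr_left ?_)
    rintro ⟨s, u, v⟩ _
    simp only [Function.comp_apply, map_smul, smul_eq_mul]
    rw [hC2_char (cnt t) (cnt u) (θ i) (wd t) (wd u) (wd v) (hmem t) (hmem u)]
    by_cases h : u = [i]
    · subst h
      rw [if_pos rfl, wd_single, hC_gen, if_pos rfl,
        show (if i = 1 then (1 : Kq) else (qd i - (qd i)⁻¹)⁻¹) = cval i from rfl,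
        pardeg_cnt_val, pardeg_cnt_val]
    · rw [if_neg h, hCθ i u h]
      ring
  have hw4 : ∀ a b c d : Fin 3, θ a * θ b * θ c * θ d = wd [a,b,c,d] := by
    intro a b c d; simp [wd, mul_assoc]
  -- l is homogeneous of multidegree (1,2,1)
  have hl_mem : l ∈ grF (cnt [1,0,1,2]) := by
    have m1 := hmem [1,0,1,2]
    have m2 := hmem [1,2,1,0]
    have m3 := hmem [0,1,2,1]
    have m4 := hmem [2,1,0,1]
    have m5 := hmem [1,0,2,1]
    rw [show cnt [1,2,1,0] = cnt [1,0,1,2] by decide] at m2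
    rw [show cnt [0,1,2,1] = cnt [1,0,1,2] by decide] at m3
    rw [show cnt [2,1,0,1] = cnt [1,0,1,2] by decide] at m4
    rw [show cnt [1,0,2,1] = cnt [1,0,1,2] by decide] at m5
    rw [hl]
    simp only [hw4]
    exact Submodule.sub_mem _
      (Submodule.add_mem _ (Submodule.add_mem _ (Submodule.add_mem _ m1 m2) m3) m4)
      (Submodule.smul_mem _ _ m5)
  -- C vanishes against l on every word
  have hword : ∀ L : List (Fin 3), C (wd L) l = 0 := by
    intro L
    by_cases hc : cnt L = cnt [1,0,1,2]
    · have hlen : L.length = 4 := by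
        have h1 := sum_cnt L
        rw [hc, sum_cnt] at h1
        simpa using h1.symm
      obtain ⟨a, b, e, d, rfl⟩ : ∃ a b e d, L = [a, b, e, d] := by
        match L, hlen with
        | [a, b, e, d], _ => exact ⟨a, b, e, d, rfl⟩
      fin_cases a <;> fin_cases b <;> fin_cases e <;> fin_cases d <;>
        first
          | exact absurd hc (by decide)
          | (rw [hl]
             simp only [hw4]
             simp only [map_add, map_sub, map_smul, smul_eq_mul]
             simp (config := { decide := true }) [hstep, hCbase, rcL, tw, cval,
               parN, parR, pairZ, dca, qd, dsym]
             try (simp only [inv_q_sub', inv_q_sub]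
                  generalize (qq ^ 2 - 1 : Kq)⁻¹ = u
                  have h1 := qq_ne_zero
                  field_simp
                  try ring
                  try (simp only [inv_pow]; field_simp; ring)))
    · exact hC_deg (cnt L) (cnt [1,0,1,2]) hc _ (hmem L) _ hl_mem
  -- C vanishes against l everywhere
  have hall : ∀ x : Ff, C x l = 0 := by
    intro x
    have h0 : x ∈ Algebra.adjoin Kq (Set.range (FreeAlgebra.ι Kq : Fin 3 → Ff)) := by
      rw [FreeAlgebra.adjoin_range_ι]
      exact Algebra.mem_top
    have h1 : x ∈ Submodule.span Kq
        ((Submonoid.closure (Set.range (FreeAlgebra.ι Kq : Fin 3 → Ff)) : Submonoid Ff) : Set Ff) := by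
      rw [← Algebra.adjoin_eq_span]
      exact (Subalgebra.mem_toSubmodule _).mpr h0
    refine Submodule.span_induction ?_ ?_ ?_ ?_ h1
    · intro w hw
      obtain ⟨lst, hlst, rfl⟩ := Submonoid.exists_list_of_mem_closure hw
      obtain ⟨L, rfl⟩ := exists_word lst hlst
      exact hword L
    · simp
    · intro x y _ _ hx hy
      rw [map_add, LinearMap.add_apply, hx, hy, add_zero]
    · intro r x _ hx
      rw [map_smul, LinearMap.smul_apply, hx, smul_zero]
  refine ⟨hall, hall _⟩
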